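/- Define rank_i(x) for x ∈ [i] as the largest t such that x is the minimum-index element of its cluster in C_i(t) (with rank_i(0) = ∞). Then for every j ∈ [i-1], rank_i(j) ≤ rank_{i-1}(j) ≤ rank_i(j) + 1; in particular ranks are non-increasing in i. -/

import Mathlib

/-- The hierarchical clustering relation with parameter `α` on the point set `A ⊆ ℕ`
(with distances `d`): `clusterRel d α A t x y` means that `x` and `y` lie in a common
cluster of the clustering `C_A(t)` at the end of phase `t`.  `C_A(0)` consists of
singletons, and phase `t+1` repeatedly merges clusters at distance less than
`2·α^(t+2)` — equivalently, takes the equivalence relation generated by pairs of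
points of `A` at distance less than `2·α^(t+2)` together with the previous relation. -/
def clusterRel (d : ℕ → ℕ → ℝ) (α : ℝ) (A : Set ℕ) : ℕ → ℕ → ℕ → Prop
  | 0 => fun x y => x = y
  | (t + 1) => Relation.EqvGen
      (fun x y => clusterRel d α A t x y ∨ (x ∈ A ∧ y ∈ A ∧ d x y < 2 * α ^ (t + 2)))

/-- `x ∈ A` is the leader (minimum-index element) of its cluster in `C_A(t)`. -/
def isLeader (d : ℕ → ℕ → ℝ) (α : ℝ) (A : Set ℕ) (t : ℕ) (x : ℕ) : Prop :=
  x ∈ A ∧ ∀ y ∈ A, clusterRel d α A t x y → x ≤ y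

/-- The rank of `x` in the clustering process on `A`: the largest phase `t` at which
`x` is still the leader of its cluster (`∞` if it is a leader forever, e.g. for the
root `0`). -/
noncomputable def rank (d : ℕ → ℕ → ℝ) (α : ℝ) (A : Set ℕ) (x : ℕ) : ℕ∞ :=
  sSup ((fun t : ℕ => (t : ℕ∞)) '' {t | isLeader d α A t x})

section Aux

variable {d : ℕ → ℕ → ℝ} {α : ℝ} {A B : Set ℕ}

theorem clusterRel_refl (t x : ℕ) : clusterRel d α A t x x := by
  cases t with
  | zero => rfl
  | succ t => exact Relation.EqvGen.refl x

theorem clusterRel_symm {t x y : ℕ} (h : clusterRel d α A t x y) :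
    clusterRel d α A t y x := by
  cases t with
  | zero => exact h.symm
  | succ t => exact Relation.EqvGen.symm x y h

theorem clusterRel_trans {t x y z : ℕ} (h1 : clusterRel d α A t x y)
    (h2 : clusterRel d α A t y z) : clusterRel d α A t x z := by
  cases t with
  | zero => exact h1.trans h2
  | succ t => exact Relation.EqvGen.trans x y z h1 h2

theorem clusterRel_equivalence (t : ℕ) : Equivalence (clusterRel d α A t) :=
  ⟨fun x => clusterRel_refl t x, clusterRel_symm, clusterRel_trans⟩

theorem clusterRel_succ {t x y : ℕ} (h : clusterRel d α A t x y) :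
    clusterRel d α A (t + 1) x y :=
  Relation.EqvGen.rel x y (Or.inl h)

theorem clusterRel_mono (hAB : A ⊆ B) {t x y : ℕ} (h : clusterRel d α A t x y) :
    clusterRel d α B t x y := by
  induction t generalizing x y with
  | zero => exact h
  | succ t ih =>
    induction h with
    | rel a b hab =>
      exact Relation.EqvGen.rel a b
        (hab.imp ih (fun ⟨h1, h2, h3⟩ => ⟨hAB h1, hAB h2, h3⟩))
    | refl a => exact Relation.EqvGen.refl a
    | symm a b _ ih2 => exact Relation.EqvGen.symm a b ih2
    | trans a b c _ _ ih2 ih3 => exact Relation.EqvGen.trans a b c ih2 ih3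

theorem clusterRel_mem {t x y : ℕ} (h : clusterRel d α A t x y) :
    x = y ∨ (x ∈ A ∧ y ∈ A) := by
  induction t generalizing x y with
  | zero => exact Or.inl h
  | succ t ih =>
    induction h with
    | rel a b hab =>
      rcases hab with h' | ⟨h1, h2, _⟩
      · exact ih h'
      · exact Or.inr ⟨h1, h2⟩
    | refl a => exact Or.inl rfl
    | symm a b _ ih2 =>
      rcases ih2 with h' | ⟨h1, h2⟩
      · exact Or.inl h'.symm
      · exact Or.inr ⟨h2, h1⟩
    | trans a b c _ _ ih2 ih3 =>
      rcases ih2 with rfl | ⟨h1, h2⟩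
      · exact ih3
      · rcases ih3 with rfl | ⟨h3, h4⟩
        · exact Or.inr ⟨h1, h2⟩
        · exact Or.inr ⟨h1, h4⟩

/-- If `x` is related to `i` in the clustering on `Iio i`, then `x = i`. -/
theorem clusterRel_eq_of_top {i t x : ℕ} (h : clusterRel d α (Set.Iio i) t x i) :
    x = i := by
  rcases clusterRel_mem h with h' | ⟨_, h2⟩
  · exact h'
  · exact absurd h2 (lt_irrefl i)

/-- The auxiliary target relation for the key lemma. -/
def keyRel (d : ℕ → ℕ → ℝ) (α : ℝ) (i t : ℕ) (x y : ℕ) : Prop :=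
  clusterRel d α (Set.Iio i) (t + 1) x y ∨
  (x = i ∧ y = i) ∨
  (x = i ∧ ∃ a, a < i ∧ d i a < 2 * α ^ (t + 1) ∧ clusterRel d α (Set.Iio i) (t + 1) a y) ∨
  (y = i ∧ ∃ a, a < i ∧ d i a < 2 * α ^ (t + 1) ∧ clusterRel d α (Set.Iio i) (t + 1) a x)

theorem keyRel_equivalence (hα : 2 ≤ α) (hsym : ∀ x y, d x y = d y x)
    (htri : ∀ x y z, d x z ≤ d x y + d y z) (i t : ℕ) :
    Equivalence (keyRel d α i (t + 1)) := by
  have hα0 : (0:ℝ) < α := lt_of_lt_of_le (by norm_num) hα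
  constructor
  · intro x
    by_cases hx : x = i
    · exact Or.inr (Or.inl ⟨hx, hx⟩)
    · exact Or.inl (clusterRel_refl _ x)
  · intro x y h
    rcases h with h | ⟨h1, h2⟩ | ⟨h1, h2⟩ | ⟨h1, h2⟩
    · exact Or.inl (clusterRel_symm h)
    · exact Or.inr (Or.inl ⟨h2, h1⟩)
    · exact Or.inr (Or.inr (Or.inr ⟨h1, h2⟩))
    · exact Or.inr (Or.inr (Or.inl ⟨h1, h2⟩))
  · intro x z y h1 h2
    rcases h1 with h1 | ⟨hx, hz⟩ | ⟨hx, a, ha, hda, hra⟩ | ⟨hz, a, ha, hda, hra⟩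
    · rcases h2 with h2 | ⟨hz, hy⟩ | ⟨hz, a', ha', hda', hra'⟩ | ⟨hy, a', ha', hda', hra'⟩
      · exact Or.inl (clusterRel_trans h1 h2)
      · exact Or.inr (Or.inl ⟨clusterRel_eq_of_top (hz ▸ h1), hy⟩)
      · exact Or.inr (Or.inr (Or.inl ⟨clusterRel_eq_of_top (hz ▸ h1), a', ha', hda', hra'⟩))
      · exact Or.inr (Or.inr (Or.inr ⟨hy, a', ha', hda',
          clusterRel_trans hra' (clusterRel_symm h1)⟩))
    · rcases h2 with h2 | ⟨_, hy⟩ | ⟨_, a', ha', hda', hra'⟩ | ⟨hy, _⟩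
      · exact Or.inr (Or.inl ⟨hx, clusterRel_eq_of_top (clusterRel_symm (hz ▸ h2))⟩)
      · exact Or.inr (Or.inl ⟨hx, hy⟩)
      · exact Or.inr (Or.inr (Or.inl ⟨hx, a', ha', hda', hra'⟩))
      · exact Or.inr (Or.inl ⟨hx, hy⟩)
    · rcases h2 with h2 | ⟨_, hy⟩ | ⟨_, a', ha', hda', hra'⟩ | ⟨hy, _⟩
      · exact Or.inr (Or.inr (Or.inl ⟨hx, a, ha, hda, clusterRel_trans hra h2⟩))
      · exact Or.inr (Or.inl ⟨hx, hy⟩)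
      · exact Or.inr (Or.inr (Or.inl ⟨hx, a', ha', hda', hra'⟩))
      · exact Or.inr (Or.inl ⟨hx, hy⟩)
    · rcases h2 with h2 | ⟨_, hy⟩ | ⟨_, a', ha', hda', hra'⟩ | ⟨hy, a', ha', hda', hra'⟩
      · exact Or.inr (Or.inr (Or.inr
          ⟨clusterRel_eq_of_top (clusterRel_symm (hz ▸ h2)), a, ha, hda, hra⟩))
      · exact Or.inr (Or.inr (Or.inr ⟨hy, a, ha, hda, hra⟩))
      · -- the key gluing case: i is near both a and a'
        refine Or.inl ?_
        have hd : d a a' < 2 * α ^ (t + 1 + 2) := by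
          have h1 : d a a' ≤ d a i + d i a' := htri a i a'
          have h2 : d a i = d i a := hsym a i
          have hp : (0:ℝ) < α ^ (t + 2) := pow_pos hα0 _
          have h4 : (4:ℝ) * α ^ (t + 2) ≤ 2 * α ^ (t + 3) := by
            have he : α ^ (t + 3) = α ^ (t + 2) * α := by ring
            nlinarith
          calc d a a' ≤ d a i + d i a' := h1
            _ = d i a + d i a' := by rw [h2]
            _ < 2 * α ^ (t + 1 + 1) + 2 * α ^ (t + 1 + 1) := add_lt_add hda hda'
            _ = 4 * α ^ (t + 2) := by ring
            _ ≤ 2 * α ^ (t + 3) := h4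
            _ = 2 * α ^ (t + 1 + 2) := by ring
        have hedge : clusterRel d α (Set.Iio i) (t + 1 + 1) a a' :=
          Relation.EqvGen.rel a a' (Or.inr ⟨ha, ha', hd⟩)
        exact clusterRel_trans (clusterRel_symm hra)
          (clusterRel_trans hedge hra')
      · exact Or.inr (Or.inr (Or.inr ⟨hy, a, ha, hda, hra⟩))

/-- Key lemma: relations of `C_{Iic i}(t)` translate to `C_{Iio i}(t+1)` up to
links through the point `i`. -/
theorem key_lemma (hα : 2 ≤ α) (hsym : ∀ x y, d x y = d y x)
    (htri : ∀ x y z, d x z ≤ d x y + d y z) (i : ℕ) :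
    ∀ t x y, clusterRel d α (Set.Iic i) t x y → keyRel d α i t x y := by
  have hα1 : (1:ℝ) ≤ α := le_trans (by norm_num) hα
  intro t
  induction t with
  | zero =>
    intro x y h
    cases h
    by_cases hx : x = i
    · exact Or.inr (Or.inl ⟨hx, hx⟩)
    · exact Or.inl (clusterRel_refl _ x)
  | succ t ih =>
    intro x y h
    have hequiv := keyRel_equivalence (d := d) hα hsym htri i t
    rw [show clusterRel d α (Set.Iic i) (t + 1) x y = Relation.EqvGen
        (fun x y => clusterRel d α (Set.Iic i) t x y ∨
          (x ∈ Set.Iic i ∧ y ∈ Set.Iic i ∧ d x y < 2 * α ^ (t + 2))) x y from rfl] at h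
    rw [← hequiv.eqvGen_iff]
    refine Relation.EqvGen.mono ?_ _ _ h
    intro a b hab
    rcases hab with hab | ⟨ha, hb, hd⟩
    · -- lift a `keyRel i t` witness to `keyRel i (t+1)`
      have hpow : 2 * α ^ (t + 1) ≤ 2 * α ^ (t + 1 + 1) := by
        have h := pow_le_pow_right₀ hα1 (show t + 1 ≤ t + 1 + 1 by omega)
        linarith
      rcases ih a b hab with h' | ⟨h1, h2⟩ | ⟨h1, c, hc, hdc, hrc⟩ | ⟨h1, c, hc, hdc, hrc⟩
      · exact Or.inl (clusterRel_succ h')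
      · exact Or.inr (Or.inl ⟨h1, h2⟩)
      · exact Or.inr (Or.inr (Or.inl ⟨h1, c, hc, lt_of_lt_of_le hdc hpow,
          clusterRel_succ hrc⟩))
      · exact Or.inr (Or.inr (Or.inr ⟨h1, c, hc, lt_of_lt_of_le hdc hpow,
          clusterRel_succ hrc⟩))
    · -- a new merge edge at phase t+1
      have hd' : d a b < 2 * α ^ (t + 1 + 1) := hd
      rcases lt_or_eq_of_le (Set.mem_Iic.mp ha) with ha' | ha'
      · rcases lt_or_eq_of_le (Set.mem_Iic.mp hb) with hb' | hb'
        · refine Or.inl ?_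
          have hlt : d a b < 2 * α ^ (t + 3) := by
            have h1 := pow_le_pow_right₀ hα1 (show t + 2 ≤ t + 3 by omega)
            have h2 : 2 * α ^ (t + 2) ≤ 2 * α ^ (t + 3) := by linarith
            exact lt_of_lt_of_le hd h2
          exact Relation.EqvGen.rel a b (Or.inr ⟨ha', hb', hlt⟩)
        · exact Or.inr (Or.inr (Or.inr ⟨hb', a, ha',
            by rw [hsym i a]; exact hb' ▸ hd', clusterRel_refl _ a⟩))
      · rcases lt_or_eq_of_le (Set.mem_Iic.mp hb) with hb' | hb'
        · exact Or.inr (Or.inr (Or.inl ⟨ha', b, hb', ha' ▸ hd', clusterRel_refl _ b⟩))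
        · exact Or.inr (Or.inl ⟨ha', hb'⟩)

theorem clusterRel_Iic_to_Iio (hα : 2 ≤ α) (hsym : ∀ x y, d x y = d y x)
    (htri : ∀ x y z, d x z ≤ d x y + d y z) {i t x y : ℕ}
    (hx : x < i) (hy : y < i) (h : clusterRel d α (Set.Iic i) t x y) :
    clusterRel d α (Set.Iio i) (t + 1) x y := by
  rcases key_lemma hα hsym htri i t x y h with h' | ⟨h1, _⟩ | ⟨h1, _⟩ | ⟨h1, _⟩
  · exact h'
  · omega
  · omega
  · omega

end Aux

theorem leader_Iic_to_Iio (d : ℕ → ℕ → ℝ) (α : ℝ) {i t j : ℕ} (hj : j < i)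
    (h : isLeader d α (Set.Iic i) t j) : isLeader d α (Set.Iio i) t j := by
  refine ⟨hj, fun y hy hr => ?_⟩
  exact h.2 y (Set.mem_Iic.mpr (le_of_lt (Set.mem_Iio.mp hy))) (clusterRel_mono Set.Iio_subset_Iic_self hr)

theorem leader_Iio_to_Iic (d : ℕ → ℕ → ℝ) (α : ℝ) (hα : 2 ≤ α)
    (hsym : ∀ x y, d x y = d y x) (htri : ∀ x y z, d x z ≤ d x y + d y z)
    {i t j : ℕ} (hj : j < i)
    (h : isLeader d α (Set.Iio i) (t + 1) j) : isLeader d α (Set.Iic i) t j := by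
  refine ⟨le_of_lt hj, fun y hy hr => ?_⟩
  rcases lt_or_eq_of_le (Set.mem_Iic.mp hy) with hy' | hy'
  · exact h.2 y hy' (clusterRel_Iic_to_Iio hα hsym htri hj hy' hr)
  · omega

/-- Ranks are monotone: `rank_i(j) ≤ rank_{i-1}(j) ≤ rank_i(j) + 1`. -/
theorem stmt_12 (d : ℕ → ℕ → ℝ) (α : ℝ) (hα : 2 ≤ α)
    (hself : ∀ x, d x x = 0) (hsym : ∀ x y, d x y = d y x)
    (htri : ∀ x y z, d x z ≤ d x y + d y z)
    (hmin : ∀ x y, x ≠ y → 2 * α ≤ d x y)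
    (i : ℕ) (j : ℕ) (hj : j ∈ Set.Iio i) :
    rank d α (Set.Iic i) j ≤ rank d α (Set.Iio i) j ∧
    rank d α (Set.Iio i) j ≤ rank d α (Set.Iic i) j + 1 := by
  constructor
  · apply sSup_le_sSup
    apply Set.image_mono
    intro t ht
    exact leader_Iic_to_Iio d α hj ht
  · apply sSup_le
    rintro a ⟨t, ht, rfl⟩
    cases t with
    | zero => exact le_trans (by norm_num) le_self_add
    | succ s =>
      have hs : isLeader d α (Set.Iic i) s j := leader_Iio_to_Iic d α hα hsym htri hj ht
      have hle : (s : ℕ∞) ≤ rank d α (Set.Iic i) j := le_sSup ⟨s, hs, rfl⟩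
      calc ((s + 1 : ℕ) : ℕ∞) = (s : ℕ∞) + 1 := by push_cast; rfl
        _ ≤ rank d α (Set.Iic i) j + 1 := add_le_add_left hle 1
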